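/- Let G be a finite connected graph with Laplacian Q, r > 0, and let x* be a detailed-balance stationary state whose single consensus edge is (i,j) (all other edges are dissensus edges). If the effective resistance ω_ij = (e_i − e_j)ᵀ Q⁺ (e_i − e_j) satisfies ω_ij < 2/3 then the Jacobian J(x*) = r(3(e_i − e_j)(e_i − e_j)ᵀ − 2Q) is negative definite on the orthogonal complement of the constant vector (x* is stable), while if ω_ij > 2/3 then J(x*) has a positive eigenvalue (x* is unstable). -/

import Mathlib

open Finset Matrix Polynomial
open scoped Classical

/-- Right-hand side of the dynamics `dx_i/dt = Σ_{j~i} (r(x_i-x_j) - (x_i-x_j)^3)`. -/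
noncomputable def rhs {N : ℕ} (G : SimpleGraph (Fin N)) (r : ℝ) (x : Fin N → ℝ) (i : Fin N) : ℝ :=
  ∑ j ∈ G.neighborFinset i, (r * (x i - x j) - (x i - x j) ^ 3)

/-- Graph Laplacian matrix. -/
noncomputable def lap {N : ℕ} (G : SimpleGraph (Fin N)) : Matrix (Fin N) (Fin N) ℝ :=
  fun i j => if i = j then (G.degree i : ℝ) else if G.Adj i j then -1 else 0

/-- Laplacian of the subgraph of consensus edges (edges with `x i = x j`). -/
noncomputable def lapEq {N : ℕ} (G : SimpleGraph (Fin N)) (x : Fin N → ℝ) :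
    Matrix (Fin N) (Fin N) ℝ :=
  fun i j => if i = j then (((G.neighborFinset i).filter (fun k => x i = x k)).card : ℝ)
    else if G.Adj i j ∧ x i = x j then -1 else 0

/-- Laplacian of the subgraph of dissensus edges (edges with `x i ≠ x j`). -/
noncomputable def lapNe {N : ℕ} (G : SimpleGraph (Fin N)) (x : Fin N → ℝ) :
    Matrix (Fin N) (Fin N) ℝ :=
  fun i j => if i = j then (((G.neighborFinset i).filter (fun k => x i ≠ x k)).card : ℝ)
    else if G.Adj i j ∧ x i ≠ x j then -1 else 0

/-- `Qp` is the Moore–Penrose pseudoinverse of `Q`. -/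
def IsMP {N : ℕ} (Q Qp : Matrix (Fin N) (Fin N) ℝ) : Prop :=
  Q * Qp * Q = Q ∧ Qp * Q * Qp = Qp ∧ (Q * Qp)ᵀ = Q * Qp ∧ (Qp * Q)ᵀ = Qp * Q

/-- The indicator difference vector `e_i - e_j`. -/
noncomputable def ev {N : ℕ} (i j : Fin N) : Fin N → ℝ := Pi.single i 1 - Pi.single j 1

/-- Effective resistance `ω_ij = (e_i-e_j)ᵀ Q⁺ (e_i-e_j)` given a pseudoinverse `Qp` of `Q`. -/
noncomputable def effRes {N : ℕ} (Qp : Matrix (Fin N) (Fin N) ℝ) (i j : Fin N) : ℝ :=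
  ev i j ⬝ᵥ (Qp *ᵥ ev i j)

/-- A detailed-balance state: every edge difference lies in `{0, √r, -√r}`. -/
def DetailedBalance {N : ℕ} (G : SimpleGraph (Fin N)) (r : ℝ) (x : Fin N → ℝ) : Prop :=
  ∀ i j, G.Adj i j → (x i - x j = 0 ∨ x i - x j = Real.sqrt r ∨ x i - x j = - Real.sqrt r)

/-- `M` is negative definite on the subspace orthogonal to the constant vector. -/
def NegDefOrth {N : ℕ} (M : Matrix (Fin N) (Fin N) ℝ) : Prop :=
  ∀ z : Fin N → ℝ, z ≠ 0 → ∑ k, z k = 0 → z ⬝ᵥ (M *ᵥ z) < 0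

/-- `M` has a positive eigenvalue. -/
def HasPosEig {N : ℕ} (M : Matrix (Fin N) (Fin N) ℝ) : Prop :=
  ∃ (μ : ℝ) (z : Fin N → ℝ), 0 < μ ∧ z ≠ 0 ∧ M *ᵥ z = μ • z

/-- The Jacobian of the dynamics `rhs` at a state `x`, defined entrywise via partial
derivatives. -/
noncomputable def jac {N : ℕ} (G : SimpleGraph (Fin N)) (r : ℝ) (x : Fin N → ℝ) :
    Matrix (Fin N) (Fin N) ℝ :=
  fun i j => deriv (fun t => rhs G r (Function.update x j t) i) (x j)

/-- The solution `α(t) = α₀ (α₀² - (α₀²-1) e^{-2μrt})^{-1/2}` of the Bernoulli ODE. -/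
noncomputable def alph (a0 mu r : ℝ) (t : ℝ) : ℝ :=
  a0 / Real.sqrt (a0 ^ 2 - (a0 ^ 2 - 1) * Real.exp (-(2 * mu * r * t)))


section Aux

lemma lap_eq_lapMatrix {N : ℕ} (G : SimpleGraph (Fin N)) : lap G = G.lapMatrix ℝ := by
  ext a b
  simp only [lap, SimpleGraph.lapMatrix, SimpleGraph.degMatrix, Matrix.sub_apply,
    Matrix.diagonal_apply, SimpleGraph.adjMatrix_apply]
  by_cases h : a = b
  · subst h; simp [G.irrefl]
  · by_cases hadj : G.Adj a b <;> simp [h, hadj]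

lemma lap_transpose {N : ℕ} (G : SimpleGraph (Fin N)) : (lap G)ᵀ = lap G := by
  ext a b
  simp only [Matrix.transpose_apply, lap]
  by_cases h : a = b
  · subst h; simp
  · rw [if_neg (Ne.symm h), if_neg h]
    by_cases hadj : G.Adj a b
    · rw [if_pos (G.adj_symm hadj), if_pos hadj]
    · rw [if_neg (fun h' => hadj (G.adj_symm h')), if_neg hadj]

lemma lap_posSemidef {N : ℕ} (G : SimpleGraph (Fin N)) : PosSemidef (lap G) := by
  rw [lap_eq_lapMatrix]; exact SimpleGraph.posSemidef_lapMatrix ℝ G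

lemma lap_ker {N : ℕ} {G : SimpleGraph (Fin N)} (hG : G.Connected) (w : Fin N → ℝ)
    (hw : lap G *ᵥ w = 0) : ∀ a b, w a = w b := by
  intro a b
  have h := (SimpleGraph.lapMatrix_mulVec_eq_zero_iff_forall_reachable (G := G) (x := w)).mp ?_
  · exact h a b (hG.preconnected a b)
  · rw [← lap_eq_lapMatrix, hw]

lemma dp_transpose {N : ℕ} (A : Matrix (Fin N) (Fin N) ℝ) (x y : Fin N → ℝ) :
    (Aᵀ *ᵥ x) ⬝ᵥ y = x ⬝ᵥ (A *ᵥ y) := by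
  rw [Matrix.dotProduct_mulVec, Matrix.mulVec_transpose]

lemma dp_transpose' {N : ℕ} (A : Matrix (Fin N) (Fin N) ℝ) (x y : Fin N → ℝ) :
    (A *ᵥ x) ⬝ᵥ y = x ⬝ᵥ (Aᵀ *ᵥ y) := by
  conv_lhs => rw [← Matrix.transpose_transpose A]
  rw [dp_transpose]

lemma psd_cs {N : ℕ} {Q : Matrix (Fin N) (Fin N) ℝ} (hQ : PosSemidef Q) (hsym : Qᵀ = Q)
    (a z : Fin N → ℝ) :
    (a ⬝ᵥ (Q *ᵥ z)) ^ 2 ≤ (a ⬝ᵥ (Q *ᵥ a)) * (z ⬝ᵥ (Q *ᵥ z)) := by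
  have hcross : z ⬝ᵥ (Q *ᵥ a) = a ⬝ᵥ (Q *ᵥ z) := by
    rw [← dp_transpose, hsym, dotProduct_comm]
  have h : ∀ t : ℝ, 0 ≤ (z ⬝ᵥ (Q *ᵥ z)) * (t * t) + (2 * (a ⬝ᵥ (Q *ᵥ z))) * t
      + (a ⬝ᵥ (Q *ᵥ a)) := by
    intro t
    have := hQ.dotProduct_mulVec_nonneg (a + t • z)
    simp only [star_trivial, Matrix.mulVec_add, Matrix.mulVec_smul, dotProduct_add,
      add_dotProduct, smul_dotProduct, dotProduct_smul, smul_eq_mul] at this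
    rw [hcross] at this
    nlinarith [this]
  have hd := discrim_le_zero h
  rw [discrim] at hd
  nlinarith [hd]

lemma pos_eig_of_quad {N : ℕ} {M : Matrix (Fin N) (Fin N) ℝ} (hM : M.IsHermitian)
    (z : Fin N → ℝ) (hz : 0 < z ⬝ᵥ (M *ᵥ z)) :
    ∃ (μ : ℝ) (w : Fin N → ℝ), 0 < μ ∧ w ≠ 0 ∧ M *ᵥ w = μ • w := by
  by_contra hcon
  push_neg at hcon
  have hB : (-M).IsHermitian := hM.neg
  have hnn : ∀ k, 0 ≤ hB.eigenvalues k := by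
    intro k
    by_contra hneg
    push_neg at hneg
    set w : Fin N → ℝ := ⇑(hB.eigenvectorBasis k) with hw
    have hbe : (-M) *ᵥ w = hB.eigenvalues k • w := hB.mulVec_eigenvectorBasis k
    have hMe : M *ᵥ w = (-(hB.eigenvalues k)) • w := by
      have := congrArg Neg.neg hbe
      simpa [Matrix.neg_mulVec, neg_smul] using this
    have hwne : w ≠ 0 := by
      intro h0
      have hb0 : hB.eigenvectorBasis k = 0 := by
        apply (WithLp.equiv 2 _).injective
        simpa [hw] using h0
      exact (hB.eigenvectorBasis).toBasis.ne_zero k (by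
        simpa [OrthonormalBasis.coe_toBasis] using hb0)
    exact (hcon (-(hB.eigenvalues k)) w (by linarith) hwne) hMe
  have hPSD : PosSemidef (-M) := hB.posSemidef_iff_eigenvalues_nonneg.mpr hnn
  have := hPSD.dotProduct_mulVec_nonneg z
  simp only [star_trivial, Matrix.neg_mulVec, dotProduct_neg] at this
  linarith

lemma lap_quad_pos {N : ℕ} {G : SimpleGraph (Fin N)} (hG : G.Connected)
    (z : Fin N → ℝ) (hz0 : z ≠ 0) (hzs : ∑ k, z k = 0) : 0 < z ⬝ᵥ (lap G *ᵥ z) := by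
  have hnn := (lap_posSemidef G).dotProduct_mulVec_nonneg z
  rw [star_trivial] at hnn
  rcases lt_or_eq_of_le hnn with h | h
  · exact h
  · exfalso
    have hker : lap G *ᵥ z = 0 := ((lap_posSemidef G).dotProduct_mulVec_zero_iff z).mp
      (by rw [star_trivial]; exact h.symm)
    obtain ⟨k, hk⟩ := Function.ne_iff.mp hz0
    have hconst := lap_ker hG z hker
    have : ∑ l, z l = (Fintype.card (Fin N)) • z k := by
      rw [Finset.sum_congr rfl (fun l _ => hconst l k)]
      simp [Finset.card_univ]
    rw [hzs, nsmul_eq_mul] at this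
    have hcard : (0:ℝ) < Fintype.card (Fin N) := by
      exact_mod_cast Fintype.card_pos_iff.mpr ⟨k⟩
    have hzk : z k = 0 := by
      rcases mul_eq_zero.mp this.symm with h' | h'
      · exact absurd h' (ne_of_gt hcard)
      · exact h'
    exact hk (by simpa using hzk)

lemma proj_fix {N : ℕ} {G : SimpleGraph (Fin N)} (hG : G.Connected)
    {S : Matrix (Fin N) (Fin N) ℝ} (hSsym : Sᵀ = S) (hQS : lap G * S = lap G)
    (z : Fin N → ℝ) (hzs : ∑ k, z k = 0) : S *ᵥ z = z := by
  cases isEmpty_or_nonempty (Fin N) with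
  | inl h => ext k; exact (IsEmpty.false k).elim
  | inr h =>
    have hconst : ∀ u : Fin N → ℝ, ∀ a b, (u - S *ᵥ u) a = (u - S *ᵥ u) b := by
      intro u
      apply lap_ker hG
      rw [Matrix.mulVec_sub, Matrix.mulVec_mulVec, hQS, sub_self]
    obtain ⟨a₀⟩ := h
    have hS1 : ∀ a, (S *ᵥ (fun _ => (1:ℝ))) a = (S *ᵥ (fun _ => (1:ℝ))) a₀ := by
      intro a
      have := hconst (fun _ => (1:ℝ)) a a₀
      simp only [Pi.sub_apply] at this
      linarith
    have hsum : ∑ k, (S *ᵥ z) k = 0 := by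
      have : ∑ k, (S *ᵥ z) k = ∑ l, (S *ᵥ (fun _ => (1:ℝ))) l * z l := by
        simp only [Matrix.mulVec, dotProduct]
        rw [Finset.sum_comm]
        congr 1; ext l
        rw [Finset.sum_mul]
        congr 1; ext k
        have hkl : S k l = S l k := by
          conv_rhs => rw [← hSsym]
          rfl
        rw [hkl]; ring
      rw [this, Finset.sum_congr rfl (fun l _ => by rw [hS1 l]), ← Finset.mul_sum, hzs, mul_zero]
    have hc := hconst z
    have hzero : (z - S *ᵥ z) a₀ = 0 := by
      have hs : ∑ k, (z - S *ᵥ z) k = 0 := by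
        simp only [Pi.sub_apply, Finset.sum_sub_distrib, hzs, hsum, sub_zero]
      have : ∑ k, (z - S *ᵥ z) k = (Fintype.card (Fin N)) • (z - S *ᵥ z) a₀ := by
        rw [Finset.sum_congr rfl (fun l _ => hc l a₀)]
        simp [Finset.card_univ]; ring
      rw [hs, nsmul_eq_mul] at this
      have hcard : (0:ℝ) < Fintype.card (Fin N) := by
        exact_mod_cast Fintype.card_pos_iff.mpr ⟨a₀⟩
      rcases mul_eq_zero.mp this.symm with h' | h'
      · exact absurd h' (ne_of_gt hcard)
      · exact h'
    ext k
    have hck := hc k a₀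
    rw [hzero] at hck
    have : z k - (S *ᵥ z) k = 0 := hck
    linarith

end Aux

/-- stability of a detailed-balance state with a single consensus edge is
decided by the effective resistance of that edge compared to `2/3`. -/
theorem stmt_6 {N : ℕ} (G : SimpleGraph (Fin N)) (hG : G.Connected) (r : ℝ) (hr : 0 < r)
    (i j : Fin N) (hij : G.Adj i j) (x : Fin N → ℝ)
    (hcons : x i = x j)
    (hdiss : ∀ a b, G.Adj a b → ¬({a, b} : Set (Fin N)) = {i, j} →
      (x a - x b = Real.sqrt r ∨ x a - x b = - Real.sqrt r))
    (Qp : Matrix (Fin N) (Fin N) ℝ) (hQp : IsMP (lap G) Qp) :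
    (effRes Qp i j < 2 / 3 →
      NegDefOrth (r • ((3 : ℝ) • vecMulVec (ev i j) (ev i j) - (2 : ℝ) • lap G))) ∧
    (2 / 3 < effRes Qp i j →
      HasPosEig (r • ((3 : ℝ) • vecMulVec (ev i j) (ev i j) - (2 : ℝ) • lap G))) := by
  obtain ⟨h1, h2, h3, h4⟩ := hQp
  have hsym : (lap G)ᵀ = lap G := lap_transpose G
  set Q : Matrix (Fin N) (Fin N) ℝ := lap G with hQdef
  set v : Fin N → ℝ := ev i j with hvdef
  have hvsum : ∑ k, v k = 0 := by
    simp [hvdef, ev, Finset.sum_sub_distrib, Finset.sum_pi_single]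
  have hSQ : Q * (Qp * Q) = Q := by rw [← Matrix.mul_assoc, h1]
  have hQT : Q * (Q * Qp) = Q := by
    have h := congrArg Matrix.transpose h1
    rwa [Matrix.transpose_mul, h3, hsym] at h
  have hproj : ∀ w : Fin N → ℝ, ∑ k, w k = 0 → (Qp * Q) *ᵥ w = w :=
    fun w hw => proj_fix hG h4 hSQ w hw
  have hprojT : ∀ w : Fin N → ℝ, ∑ k, w k = 0 → (Q * Qp) *ᵥ w = w :=
    fun w hw => proj_fix hG h3 hQT w hw
  set ω : ℝ := effRes Qp i j with hωdef
  have hquad : ∀ z : Fin N → ℝ,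
      z ⬝ᵥ ((r • ((3:ℝ) • vecMulVec v v - (2:ℝ) • Q)) *ᵥ z)
        = r * (3 * (v ⬝ᵥ z) ^ 2 - 2 * (z ⬝ᵥ (Q *ᵥ z))) := by
    intro z
    have hvv : vecMulVec v v *ᵥ z = (v ⬝ᵥ z) • v := by
      ext k
      simp only [Matrix.mulVec, dotProduct, Matrix.vecMulVec_apply, Pi.smul_apply,
        smul_eq_mul, Finset.mul_sum]
      rw [Finset.sum_mul]
      congr 1; ext l; ring
    rw [Matrix.smul_mulVec, Matrix.sub_mulVec, Matrix.smul_mulVec,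
      Matrix.smul_mulVec, hvv]
    simp only [dotProduct_smul, dotProduct_sub, smul_eq_mul, dotProduct_smul]
    rw [dotProduct_comm z v]
    ring
  constructor
  · intro hlt z hz0 hzs
    have hQpT : Qpᵀ * Q = Q * Qp := by
      calc Qpᵀ * Q = Qpᵀ * Qᵀ := by rw [hsym]
        _ = (Q * Qp)ᵀ := (Matrix.transpose_mul Q Qp).symm
        _ = Q * Qp := h3
    have key1 : (Qp *ᵥ v) ⬝ᵥ (Q *ᵥ z) = v ⬝ᵥ z := by
      rw [dp_transpose', Matrix.mulVec_mulVec, hQpT, hprojT z hzs]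
    have key2 : (Qp *ᵥ v) ⬝ᵥ (Q *ᵥ (Qp *ᵥ v)) = ω := by
      rw [Matrix.mulVec_mulVec, hprojT v hvsum, dotProduct_comm]
      simp only [hωdef, effRes, hvdef]
    have hq := lap_quad_pos hG z hz0 hzs
    have hcs := psd_cs (lap_posSemidef G) hsym (Qp *ᵥ v) z
    rw [key1, key2] at hcs
    rw [hquad z]
    have hq' : 0 < z ⬝ᵥ (Q *ᵥ z) := hq
    have h5 : 3 * (v ⬝ᵥ z) ^ 2 < 2 * (z ⬝ᵥ (Q *ᵥ z)) := by
      nlinarith [hcs, hq', mul_pos (show (0:ℝ) < 2 - 3 * ω by linarith) hq']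
    nlinarith [mul_pos hr (show (0:ℝ) < 2 * (z ⬝ᵥ (Q *ᵥ z)) - 3 * (v ⬝ᵥ z) ^ 2 by linarith)]
  · intro hgt
    set z : Fin N → ℝ := Qp *ᵥ v with hzdef
    have hTv := hprojT v hvsum
    have hQz : Q *ᵥ z = v := by rw [hzdef, Matrix.mulVec_mulVec, hTv]
    have hvz : v ⬝ᵥ z = ω := by simp only [hzdef, hωdef, effRes, hvdef]
    have hzQz : z ⬝ᵥ (Q *ᵥ z) = ω := by
      rw [hQz, dotProduct_comm]
      exact hvz
    have hpos : 0 < z ⬝ᵥ ((r • ((3:ℝ) • vecMulVec v v - (2:ℝ) • Q)) *ᵥ z) := by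
      rw [hquad z, hvz, hzQz]
      nlinarith [mul_pos hr (mul_pos (show (0:ℝ) < ω by linarith)
        (show (0:ℝ) < 3 * ω - 2 by linarith))]
    have hherm : (r • ((3:ℝ) • vecMulVec v v - (2:ℝ) • Q)).IsHermitian := by
      have hvvt : (vecMulVec v v)ᵀ = vecMulVec v v := by
        ext k l
        simp [Matrix.vecMulVec_apply, mul_comm]
      show (r • ((3:ℝ) • vecMulVec v v - (2:ℝ) • Q))ᴴ = _
      rw [Matrix.conjTranspose_eq_transpose_of_trivial, Matrix.transpose_smul,
        Matrix.transpose_sub, Matrix.transpose_smul, Matrix.transpose_smul, hvvt, hsym]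
    exact pos_eig_of_quad hherm z hpos
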